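/- Let Y ∈ {0,1}^{n×m} be a binary matrix whose column-sum vector r = Yᵀe satisfies the power law r_g = r_max · g^(−α) for g = 1,…,m with r_max > 0 and α > 2. Let (σ1, p1, q1) be a principal singular triple of Y in which p1 and q1 are entrywise nonnegative. Then cos(r, q1) ≥ √((2 − ζ(α))/ζ(2α)). -/

import Mathlib

open Matrix

/-- Riemann zeta function for real `s > 1`: `ζ(s) = ∑_{j=1}^∞ j^(−s)`. -/
noncomputable def zetaR (s : ℝ) : ℝ := ∑' j : ℕ, ((j : ℝ) + 1) ^ (-s)

/-- Euclidean (L2) norm of a vector. -/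
noncomputable def l2norm {k : ℕ} (v : Fin k → ℝ) : ℝ := Real.sqrt (∑ i, v i ^ 2)

/-- Cosine similarity of two vectors. -/
noncomputable def vcos {k : ℕ} (x y : Fin k → ℝ) : ℝ :=
  (∑ i, x i * y i) / (l2norm x * l2norm y)

lemma zetaR_summable {s : ℝ} (hs : 1 < s) :
    Summable (fun j : ℕ => ((j : ℝ) + 1) ^ (-s)) := by
  have h1 : Summable (fun n : ℕ => (n : ℝ) ^ (-s)) :=
    Real.summable_nat_rpow.2 (by linarith)
  have h2 := (summable_nat_add_iff 1).2 h1
  refine h2.congr fun j => ?_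
  push_cast
  ring_nf

lemma zetaR_partial_le {s : ℝ} (hs : 1 < s) (m : ℕ) :
    ∑ g : Fin m, (((g : ℕ) : ℝ) + 1) ^ (-s) ≤ zetaR s := by
  rw [Fin.sum_univ_eq_sum_range (fun j => ((j : ℝ) + 1) ^ (-s))]
  exact Summable.sum_le_tsum _ (fun j _ => Real.rpow_nonneg (by positivity) _) (zetaR_summable hs)

/-- Let `Y ∈ {0,1}^{n×m}` be a binary matrix whose column-sum vector
`r = Yᵀe` satisfies the power law `r_g = r_max · g^(−α)` with `r_max > 0` and `α > 2`.
Let `(σ1, p1, q1)` be a principal singular triple of `Y` (σ1 the largest singular value,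
i.e., the operator 2-norm, `p1, q1` unit vectors with `Y q1 = σ1 p1`, `Yᵀ p1 = σ1 q1`)
where `p1` and `q1` are entrywise nonnegative.  Then
`cos(r, q1) ≥ √((2 − ζ(α))/ζ(2α))`. -/
theorem popularity_memorization_bound_simple
    (n m : ℕ) (Y : Matrix (Fin n) (Fin m) ℝ)
    (hbin : ∀ u i, Y u i = 0 ∨ Y u i = 1)
    (α rmax : ℝ) (hα : 2 < α) (hrmax : 0 < rmax)
    (r : Fin m → ℝ) (hrdef : r = Yᵀ.mulVec (fun _ => 1))
    (hpow : ∀ g : Fin m, r g = rmax * (((g : ℕ) : ℝ) + 1) ^ (-α))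
    (σ1 : ℝ) (p1 : Fin n → ℝ) (q1 : Fin m → ℝ)
    (hσnn : 0 ≤ σ1)
    (hop : ∀ q : Fin m → ℝ, l2norm q = 1 → l2norm (Y.mulVec q) ≤ σ1)
    (hp1 : l2norm p1 = 1) (hq1 : l2norm q1 = 1)
    (hYq : Y.mulVec q1 = σ1 • p1) (hYp : Yᵀ.mulVec p1 = σ1 • q1)
    (hpnn : ∀ u, 0 ≤ p1 u) (hqnn : ∀ i, 0 ≤ q1 i) :
    vcos r q1 ≥ Real.sqrt ((2 - zetaR α) / zetaR (2 * α)) := by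
  have hα1 : (1 : ℝ) < α := by linarith
  have h2α1 : (1 : ℝ) < 2 * α := by linarith
  -- m is positive
  have hm : 0 < m := by
    rcases Nat.eq_zero_or_pos m with h | h
    · exfalso; subst h; simp [l2norm] at hq1
    · exact h
  set e0 : Fin m := ⟨0, hm⟩ with he0
  -- basic facts about r
  have hr_sum : ∀ g, r g = ∑ u, Y u g := by
    intro g; rw [hrdef]; simp [Matrix.mulVec, dotProduct]
  have hr_pos : ∀ g, 0 < r g := by
    intro g; rw [hpow]
    have : (0 : ℝ) < (((g : ℕ) : ℝ) + 1) ^ (-α) := by positivity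
    positivity
  have hcolsq : ∀ g, ∑ u, (Y u g) ^ 2 = r g := by
    intro g
    rw [hr_sum g]
    refine Finset.sum_congr rfl fun u _ => ?_
    rcases hbin u g with h | h <;> rw [h] <;> norm_num
  have hr0 : r e0 = rmax := by
    rw [hpow]
    norm_num [he0]
  -- ∑ p1² = 1 and ∑ q1² = 1
  have hpsq : ∑ u, p1 u ^ 2 = 1 := by
    have hnn : (0 : ℝ) ≤ ∑ u, p1 u ^ 2 := by positivity
    have h := hp1
    rw [l2norm] at h
    rw [← Real.sq_sqrt hnn, h]; norm_num
  have hqsq : ∑ i, q1 i ^ 2 = 1 := by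
    have hnn : (0 : ℝ) ≤ ∑ i, q1 i ^ 2 := by positivity
    have h := hq1
    rw [l2norm] at h
    rw [← Real.sq_sqrt hnn, h]; norm_num
  -- σ1² ≥ rmax
  have hσ2 : rmax ≤ σ1 ^ 2 := by
    set q : Fin m → ℝ := fun i => if i = e0 then (1 : ℝ) else 0 with hqd
    have hqnorm : l2norm q = 1 := by
      simp [l2norm, hqd, apply_ite (· ^ 2), Finset.sum_ite_eq']
    have hmv : ∀ u, (Y.mulVec q) u = Y u e0 := by
      intro u
      simp [Matrix.mulVec, dotProduct, hqd, mul_ite, Finset.sum_ite_eq']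
    have hnorm : l2norm (Y.mulVec q) = Real.sqrt rmax := by
      rw [l2norm]
      congr 1
      calc ∑ u, (Y.mulVec q) u ^ 2 = ∑ u, (Y u e0) ^ 2 := by
            refine Finset.sum_congr rfl fun u _ => by rw [hmv u]
        _ = r e0 := hcolsq e0
        _ = rmax := hr0
    have hle := hop q hqnorm
    rw [hnorm] at hle
    calc rmax = Real.sqrt rmax ^ 2 := (Real.sq_sqrt hrmax.le).symm
      _ ≤ σ1 ^ 2 := by
          have h0 : 0 ≤ Real.sqrt rmax := Real.sqrt_nonneg _
          nlinarith
  have hσpos : 0 < σ1 := by nlinarith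
  -- pointwise bound on q1
  have hq1sq : ∀ g, q1 g ^ 2 ≤ (((g : ℕ) : ℝ) + 1) ^ (-α) := by
    intro g
    have hYpg : σ1 * q1 g = ∑ u, Y u g * p1 u := by
      have h := congrFun hYp g
      simp only [Matrix.mulVec, dotProduct, Matrix.transpose_apply, Pi.smul_apply,
        smul_eq_mul] at h
      rw [← h]
    have hcs : (∑ u, Y u g * p1 u) ^ 2 ≤ (∑ u, (Y u g) ^ 2) * (∑ u, p1 u ^ 2) :=
      Finset.sum_mul_sq_le_sq_mul_sq _ _ _
    have h1 : (σ1 * q1 g) ^ 2 ≤ r g := by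
      rw [hYpg]
      calc (∑ u, Y u g * p1 u) ^ 2 ≤ (∑ u, (Y u g) ^ 2) * (∑ u, p1 u ^ 2) := hcs
        _ = r g := by rw [hcolsq, hpsq, mul_one]
    have h2 : rmax * q1 g ^ 2 ≤ r g := by
      calc rmax * q1 g ^ 2 ≤ σ1 ^ 2 * q1 g ^ 2 := by
            exact mul_le_mul_of_nonneg_right hσ2 (sq_nonneg _)
        _ = (σ1 * q1 g) ^ 2 := by ring
        _ ≤ r g := h1
    rw [hpow g] at h2
    exact le_of_mul_le_mul_left h2 hrmax
  -- tail bound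
  have htail : ∑ g ∈ Finset.univ.erase e0, q1 g ^ 2 ≤ zetaR α - 1 := by
    calc ∑ g ∈ Finset.univ.erase e0, q1 g ^ 2
        ≤ ∑ g ∈ Finset.univ.erase e0, (((g : ℕ) : ℝ) + 1) ^ (-α) :=
          Finset.sum_le_sum fun g _ => hq1sq g
      _ = (∑ g : Fin m, (((g : ℕ) : ℝ) + 1) ^ (-α)) - ((((e0 : ℕ) : ℝ) + 1) ^ (-α)) :=
          Finset.sum_erase_eq_sub (Finset.mem_univ e0)
      _ ≤ zetaR α - 1 := by
          have h := zetaR_partial_le hα1 m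
          have he : (((e0 : ℕ) : ℝ) + 1) ^ (-α) = 1 := by norm_num [he0]
          rw [he]; linarith
  -- q1 e0 lower bound
  have hq1e0sq : 2 - zetaR α ≤ q1 e0 ^ 2 := by
    have h : ∑ g ∈ Finset.univ.erase e0, q1 g ^ 2 = (∑ i, q1 i ^ 2) - q1 e0 ^ 2 :=
      Finset.sum_erase_eq_sub (Finset.mem_univ e0)
    rw [hqsq] at h
    linarith
  have hq1e0 : Real.sqrt (2 - zetaR α) ≤ q1 e0 := by
    calc Real.sqrt (2 - zetaR α) ≤ Real.sqrt (q1 e0 ^ 2) := Real.sqrt_le_sqrt hq1e0sq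
      _ = q1 e0 := Real.sqrt_sq (hqnn e0)
  -- numerator bound
  have hNnn : 0 ≤ ∑ i, r i * q1 i :=
    Finset.sum_nonneg fun i _ => mul_nonneg (hr_pos i).le (hqnn i)
  have hN : rmax * Real.sqrt (2 - zetaR α) ≤ ∑ i, r i * q1 i := by
    have h1 : rmax * Real.sqrt (2 - zetaR α) ≤ r e0 * q1 e0 := by
      rw [hr0]; exact mul_le_mul_of_nonneg_left hq1e0 hrmax.le
    exact h1.trans (Finset.single_le_sum
      (fun i _ => mul_nonneg (hr_pos i).le (hqnn i)) (Finset.mem_univ e0))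
  -- denominator bound
  have hrsq : ∑ i, r i ^ 2 ≤ rmax ^ 2 * zetaR (2 * α) := by
    have heq : ∀ g : Fin m, r g ^ 2 = rmax ^ 2 * (((g : ℕ) : ℝ) + 1) ^ (-(2 * α)) := by
      intro g
      have hx : (0 : ℝ) < ((g : ℕ) : ℝ) + 1 := by positivity
      rw [hpow g, mul_pow, sq ((((g : ℕ) : ℝ) + 1) ^ (-α)), ← Real.rpow_add hx]
      ring_nf
    calc ∑ i, r i ^ 2 = rmax ^ 2 * ∑ g : Fin m, (((g : ℕ) : ℝ) + 1) ^ (-(2 * α)) := by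
          rw [Finset.mul_sum]; exact Finset.sum_congr rfl fun g _ => heq g
      _ ≤ rmax ^ 2 * zetaR (2 * α) := by
          have h := zetaR_partial_le h2α1 m
          exact mul_le_mul_of_nonneg_left h (sq_nonneg _)
  have hD_le : l2norm r ≤ rmax * Real.sqrt (zetaR (2 * α)) := by
    rw [l2norm]
    calc Real.sqrt (∑ i, r i ^ 2) ≤ Real.sqrt (rmax ^ 2 * zetaR (2 * α)) :=
          Real.sqrt_le_sqrt hrsq
      _ = rmax * Real.sqrt (zetaR (2 * α)) := by
          rw [Real.sqrt_mul (sq_nonneg _), Real.sqrt_sq hrmax.le]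
  have hD_pos : 0 < l2norm r := by
    rw [l2norm]
    apply Real.sqrt_pos.2
    have h1 : r e0 ^ 2 ≤ ∑ i, r i ^ 2 :=
      Finset.single_le_sum (f := fun i => r i ^ 2) (fun i _ => sq_nonneg _) (Finset.mem_univ e0)
    nlinarith [hr_pos e0]
  -- zeta positivity
  have hB1 : 1 ≤ zetaR (2 * α) := by
    have h := zetaR_partial_le h2α1 m
    have h1 : (1 : ℝ) = (((e0 : ℕ) : ℝ) + 1) ^ (-(2 * α)) := by norm_num [he0]
    calc (1 : ℝ) = (((e0 : ℕ) : ℝ) + 1) ^ (-(2 * α)) := h1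
      _ ≤ ∑ g : Fin m, (((g : ℕ) : ℝ) + 1) ^ (-(2 * α)) :=
          Finset.single_le_sum (f := fun g : Fin m => (((g : ℕ) : ℝ) + 1) ^ (-(2 * α)))
            (fun g _ => Real.rpow_nonneg (by positivity) _) (Finset.mem_univ e0)
      _ ≤ zetaR (2 * α) := h
  have hBpos : 0 < zetaR (2 * α) := by linarith
  -- conclude
  rw [vcos, hq1, mul_one, ge_iff_le]
  rcases le_or_gt (2 - zetaR α) 0 with hA0 | hA0
  · have hABle : (2 - zetaR α) / zetaR (2 * α) ≤ 0 := div_nonpos_of_nonpos_of_nonneg hA0 hBpos.le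
    rw [Real.sqrt_eq_zero'.mpr hABle]
    exact div_nonneg hNnn hD_pos.le
  · have hkey : rmax * Real.sqrt (2 - zetaR α) / (rmax * Real.sqrt (zetaR (2 * α)))
        ≤ (∑ i, r i * q1 i) / l2norm r :=
      div_le_div₀ hNnn hN hD_pos hD_le
    have heq : rmax * Real.sqrt (2 - zetaR α) / (rmax * Real.sqrt (zetaR (2 * α)))
        = Real.sqrt ((2 - zetaR α) / zetaR (2 * α)) := by
      rw [Real.sqrt_div hA0.le, mul_div_mul_left _ _ (ne_of_gt hrmax)]
    rw [← heq]
    exact hkey
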